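/- Let σ_1,…,σ_m be a sequence of distinct facets of the n-dimensional cross-polytope O_n and let c_1,…,c_m be the corresponding sequence of subsets of X (under the bijection c ↔ σ_c). Then σ_1,…,σ_m is a partial shelling of O_n if and only if every level set C_i = {c_1,…,c_i} is an isometric concept class. -/

import Mathlib

variable {X : Type} [Fintype X] [DecidableEq X]

/-- Hamming distance between two subsets of `X` (size of symmetric difference). -/
def hdist (c c' : Finset X) : ℕ := ((c \ c') ∪ (c' \ c)).card

/-- The restriction `C|Y = {c ∩ Y : c ∈ C}`. -/
def restrictTo (C : Finset (Finset X)) (Y : Finset X) : Finset (Finset X) :=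
  C.image (· ∩ Y)

/-- `Y` is shattered by `C`, i.e. `C|Y = 2^Y`. -/
def Shatters (C : Finset (Finset X)) (Y : Finset X) : Prop :=
  ∀ s ∈ Y.powerset, ∃ c ∈ C, c ∩ Y = s

instance (C : Finset (Finset X)) : DecidablePred (Shatters C) := fun _ => by
  unfold Shatters; infer_instance

/-- The family `X̄(C)` of all sets shattered by `C`. -/
def shatteredSets (C : Finset (Finset X)) : Finset (Finset X) :=
  Finset.univ.filter (Shatters C)

/-- The VC dimension of `C`: maximum size of a shattered set. -/
def vcDim (C : Finset (Finset X)) : ℕ := (shatteredSets C).sup Finset.card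

/-- `C` is ample: `|C| = |X̄(C)|`. -/
def IsAmple (C : Finset (Finset X)) : Prop := C.card = (shatteredSets C).card

/-- `C` is a maximum class of VC dimension `d`. -/
def IsMaximumClass (C : Finset (Finset X)) (d : ℕ) : Prop :=
  vcDim C = d ∧ C.card = ∑ i ∈ Finset.range (d + 1), (Fintype.card X).choose i

/-- `B` is a cube with support `Y`: `B = {t ∪ s : s ⊆ Y}` for some `t ⊆ X \ Y`. -/
def IsCubeS (B : Finset (Finset X)) (Y : Finset X) : Prop :=
  ∃ t : Finset X, t ∩ Y = ∅ ∧ B = Y.powerset.image (fun s => t ∪ s)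

/-- `B` is a cube. -/
def IsCube (B : Finset (Finset X)) : Prop := ∃ Y, IsCubeS B Y

/-- `B` is a cube of `C`: a cube contained in `C`. -/
def IsCubeOf (C B : Finset (Finset X)) : Prop := B ⊆ C ∧ IsCube B

/-- `B` is a maximal cube of `C` (maximal under inclusion among cubes of `C`). -/
def IsMaximalCubeOf (C B : Finset (Finset X)) : Prop :=
  IsCubeOf C B ∧ ∀ B', IsCubeOf C B' → B ⊆ B' → B = B'

/-- `c` is a corner of `C`: a concept of `C` belonging to a unique maximal cube of `C`. -/
def IsCornerOf (C : Finset (Finset X)) (c : Finset X) : Prop :=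
  c ∈ C ∧ ∃! B, IsMaximalCubeOf C B ∧ c ∈ B

/-- The one-inclusion graph `G(C)`. -/
def oneInclusionGraph (C : Finset (Finset X)) : SimpleGraph {c : Finset X // c ∈ C} where
  Adj c c' := hdist c.1 c'.1 = 1
  symm := by
    constructor
    intro a b h
    simpa [hdist, Finset.union_comm] using h
  loopless := by
    constructor
    intro a h
    simp [hdist] at h

/-- `C` is isometric: `G(C)` is connected and graph distances equal Hamming distances. -/
def IsIsometric (C : Finset (Finset X)) : Prop :=
  (oneInclusionGraph C).Connected ∧
  ∀ c c' : {c : Finset X // c ∈ C}, (oneInclusionGraph C).dist c c' = hdist c.1 c'.1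

/-- `C` is weakly isometric: `G(C)` is connected and graph distances equal Hamming
distances for pairs at Hamming distance at most 2. -/
def IsWeaklyIsometric (C : Finset (Finset X)) : Prop :=
  (oneInclusionGraph C).Connected ∧
  ∀ c c' : {c : Finset X // c ∈ C}, hdist c.1 c'.1 ≤ 2 →
    (oneInclusionGraph C).dist c c' = hdist c.1 c'.1

/-- A list of concepts is a corner peeling if it has no duplicates and each element is a
corner of the corresponding level set. -/
def IsCornerPeeling (l : List (Finset X)) : Prop :=
  l.Nodup ∧ ∀ i (h : i < l.length), IsCornerOf ((l.take (i + 1)).toFinset) (l.get ⟨i, h⟩)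

/-- `C` is dismantlable: it admits a corner peeling ordering of all its concepts. -/
def Dismantlable (C : Finset (Finset X)) : Prop :=
  ∃ l : List (Finset X), l.toFinset = C ∧ IsCornerPeeling l

/-- Non-clashing condition for a map `r`. -/
def NonClashing (C : Finset (Finset X)) (r : Finset X → Finset X) : Prop :=
  ∀ c ∈ C, ∀ c' ∈ C, c ≠ c' → c ∩ (r c ∪ r c') ≠ c' ∩ (r c ∪ r c')

/-- `r` is a representation map for `C`: a non-clashing bijection from `C` onto `X̄(C)`. -/
def IsRepMap (C : Finset (Finset X)) (r : Finset X → Finset X) : Prop :=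
  (∀ c ∈ C, r c ∈ shatteredSets C) ∧
  Set.InjOn r ↑C ∧
  (∀ Y ∈ shatteredSets C, ∃ c ∈ C, r c = Y) ∧
  NonClashing C r

/-- `C` admits an unlabeled sample compression scheme of size `k`. -/
def HasUSCS (C : Finset (Finset X)) (k : ℕ) : Prop :=
  ∃ (α : Finset X → Finset X → Finset X) (β : Finset X → Finset X),
    ∀ (Y : Finset X), ∀ c ∈ C,
      α Y (c ∩ Y) ⊆ Y ∧ (α Y (c ∩ Y)).card ≤ k ∧
      β (α Y (c ∩ Y)) ∈ C ∧ β (α Y (c ∩ Y)) ∩ Y = c ∩ Y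

/-- The cube of `2^X` with support `Y` containing `c`. -/
def cubeAt (c Y : Finset X) : Finset (Finset X) :=
  Y.powerset.image (fun s => (c \ Y) ∪ s)

/-- Condition (C1): for every `c ∈ C`, the cube with support `r c` containing `c`
is a cube of `C`. -/
def CondC1 (C : Finset (Finset X)) (r : Finset X → Finset X) : Prop :=
  ∀ c ∈ C, cubeAt c (r c) ⊆ C

/-- Condition (C2): every cube of `C` has a unique concept `c` with `r c ∩ supp B = ∅`. -/
def CondC2 (C : Finset (Finset X)) (r : Finset X → Finset X) : Prop :=
  ∀ B Y, B ⊆ C → IsCubeS B Y → ∃! c, c ∈ B ∧ r c ∩ Y = ∅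

/-- The facet of the cross-polytope corresponding to a subset `c ⊆ X`:
`+x ∈ σ_c` iff `x ∈ c` (where `+x = Sum.inl x` and `-x = Sum.inr x`). -/
def facet (c : Finset X) : Finset (X ⊕ X) :=
  c.image Sum.inl ∪ (Finset.univ \ c).image Sum.inr

/-- A list of facets of the cross-polytope is a partial shelling. -/
def IsPartialShelling (L : List (Finset (X ⊕ X))) : Prop :=
  L.Nodup ∧ ∀ i j, i < j → j < L.length →
    ∃ k < j, ((L.getD k ∅) ∩ (L.getD j ∅)).card = Fintype.card X - 1 ∧
      (L.getD i ∅) ∩ (L.getD j ∅) ⊆ (L.getD k ∅) ∩ (L.getD j ∅)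

/-- `Q` is an incomplete cube for `(C, D)` with support `σ`: a cube of `C` whose
support `σ` is a missed simplex (shattered by `C` but not by `D`). -/
def IsIncompleteCube (C D Q : Finset (Finset X)) (σ : Finset X) : Prop :=
  Q ⊆ C ∧ IsCubeS Q σ ∧ Shatters C σ ∧ ¬ Shatters D σ

/-- `c` is the source of the incomplete cube `Q` with support `σ`:
`c ∈ Q` and `c ∩ σ ∉ D|σ`. -/
def IsSource (D Q : Finset (Finset X)) (σ : Finset X) (c : Finset X) : Prop :=
  c ∈ Q ∧ c ∩ σ ∉ restrictTo D σ

/-- The restriction `C_x = C|(X \ {x})`, with concepts viewed as subsets of `X`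
avoiding `x`. -/
def restrictX (C : Finset (Finset X)) (x : X) : Finset (Finset X) :=
  C.image (·.erase x)

/-- The reduction `C^x = {c ⊆ X \ {x} : c ∈ C and c ∪ {x} ∈ C}`. -/
def reduction (C : Finset (Finset X)) (x : X) : Finset (Finset X) :=
  C.filter (fun c => x ∉ c ∧ insert x c ∈ C)

/-- The interval `B(c,c') = {t : d(c,t) + d(t,c') = d(c,c')}`. -/
def interval (c c' : Finset X) : Finset (Finset X) :=
  Finset.univ.filter (fun t => hdist c t + hdist t c' = hdist c c')

/-- `C'` is convex in `C`. -/
def IsConvexIn (C C' : Finset (Finset X)) : Prop :=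
  ∀ c ∈ C', ∀ c'' ∈ C', interval c c'' ∩ C ⊆ C'

/-- `C'` is locally convex in `C`. -/
def IsLocallyConvexIn (C C' : Finset (Finset X)) : Prop :=
  ∀ c ∈ C', ∀ c'' ∈ C', hdist c c'' = 2 → interval c c'' ∩ C ⊆ C'

/-- `C` is a conditional antimatroid: contains `∅`, closed under intersection, and
every concept is generated by its extremal points. -/
def IsCondAntimatroid (C : Finset (Finset X)) : Prop :=
  ∅ ∈ C ∧ (∀ c ∈ C, ∀ c' ∈ C, c ∩ c' ∈ C) ∧
  ∀ c ∈ C, ∀ c' ∈ C, (c.filter (fun x => c.erase x ∈ C)) ⊆ c' → c ⊆ c'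

set_option maxHeartbeats 800000
set_option linter.unusedSectionVars false

lemma hdist_eq (c c' : Finset X) : hdist c c' = (symmDiff c c').card := by
  simp [hdist, symmDiff_def, Finset.sup_eq_union]
lemma hdist_comm (c c' : Finset X) : hdist c c' = hdist c' c := by
  simp [hdist_eq, symmDiff_comm]
lemma hdist_self (c : Finset X) : hdist c c = 0 := by simp [hdist_eq]
lemma hdist_eq_zero_iff {c c' : Finset X} : hdist c c' = 0 ↔ c = c' := by
  simp [hdist_eq, Finset.card_eq_zero, symmDiff_eq_bot]
lemma hdist_triangle (a b c : Finset X) : hdist a c ≤ hdist a b + hdist b c := by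
  have h : symmDiff a c = symmDiff (symmDiff a b) (symmDiff b c) := by
    rw [symmDiff_assoc, symmDiff_symmDiff_cancel_left]
  rw [hdist_eq, hdist_eq, hdist_eq, h]
  exact le_trans (Finset.card_le_card symmDiff_le_sup) (Finset.card_union_le _ _)
lemma hdist_le_card (a b : Finset X) : hdist a b ≤ Fintype.card X := by
  rw [hdist_eq]; exact Finset.card_le_univ _
lemma symmDiff_singleton_of_mem {s : Finset X} {x : X} (hx : x ∈ s) :
    symmDiff s {x} = s.erase x := by
  ext y
  simp only [Finset.mem_symmDiff, Finset.mem_erase, Finset.mem_singleton]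
  constructor
  · rintro (⟨h1, h2⟩ | ⟨rfl, h2⟩) <;> tauto
  · rintro ⟨h1, h2⟩; tauto
lemma symmDiff_singleton_of_not_mem {s : Finset X} {x : X} (hx : x ∉ s) :
    symmDiff s {x} = insert x s := by
  ext y
  simp only [Finset.mem_symmDiff, Finset.mem_insert, Finset.mem_singleton]
  constructor
  · rintro (⟨h1, h2⟩ | ⟨rfl, h2⟩) <;> tauto
  · rintro (rfl | h)
    · tauto
    · exact Or.inl ⟨h, fun he => hx (he ▸ h)⟩
lemma hdist_step {a b k : Finset X} (h1 : hdist k b = 1) (hsub : symmDiff k b ⊆ symmDiff a b) :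
    hdist a k + 1 = hdist a b := by
  rw [hdist_eq] at h1
  obtain ⟨x, hx⟩ := Finset.card_eq_one.mp h1
  have hxab : x ∈ symmDiff a b := hsub (hx ▸ Finset.mem_singleton_self x)
  have hak : symmDiff a k = (symmDiff a b).erase x := by
    have : symmDiff a k = symmDiff (symmDiff a b) (symmDiff b k) := by
      rw [symmDiff_assoc, symmDiff_symmDiff_cancel_left]
    rw [this, symmDiff_comm b k, hx, symmDiff_singleton_of_mem hxab]
  rw [hdist_eq, hdist_eq, hak, Finset.card_erase_add_one hxab]
lemma step_subset {a b w : Finset X} (h1 : hdist w b = 1) (h2 : hdist a w + 1 = hdist a b) :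
    symmDiff w b ⊆ symmDiff a b := by
  rw [hdist_eq] at h1
  obtain ⟨x, hx⟩ := Finset.card_eq_one.mp h1
  rw [hx]
  intro y hy
  rw [Finset.mem_singleton] at hy; subst hy
  by_contra hxab
  have hak : symmDiff a w = insert y (symmDiff a b) := by
    have : symmDiff a w = symmDiff (symmDiff a b) (symmDiff b w) := by
      rw [symmDiff_assoc, symmDiff_symmDiff_cancel_left]
    rw [this, symmDiff_comm b w, hx, symmDiff_singleton_of_not_mem hxab]
  have := Finset.card_insert_of_notMem hxab
  rw [hdist_eq, hdist_eq, hak, this] at h2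
  omega




lemma mem_facet_inl {c : Finset X} {x : X} : Sum.inl x ∈ facet c ↔ x ∈ c := by
  simp [facet]
lemma mem_facet_inr {c : Finset X} {x : X} : Sum.inr x ∈ facet c ↔ x ∉ c := by
  simp [facet]
lemma facet_injective : Function.Injective (facet (X := X)) := by
  intro a b h
  ext x
  rw [← mem_facet_inl (c := a), h, mem_facet_inl]
lemma facet_inter (a b : Finset X) : facet a ∩ facet b =
    (a ∩ b).image Sum.inl ∪ ((Finset.univ \ (a ∪ b)).image Sum.inr) := by
  ext z
  rcases z with x | x <;>
    simp [Finset.mem_inter, mem_facet_inl, mem_facet_inr, facet] <;> tauto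
lemma facet_inter_card (a b : Finset X) :
    (facet a ∩ facet b).card = Fintype.card X - hdist a b := by
  rw [facet_inter]
  rw [Finset.card_union_of_disjoint]
  · rw [Finset.card_image_of_injective _ Sum.inl_injective,
      Finset.card_image_of_injective _ Sum.inr_injective, Finset.card_sdiff_of_subset (Finset.subset_univ _)]
    have h1 : (a ∪ b).card ≤ Fintype.card X := Finset.card_le_univ _
    have h2 : hdist a b + (a ∩ b).card = (a ∪ b).card := by
      rw [hdist_eq]
      have : symmDiff a b = (a ∪ b) \ (a ∩ b) := by
        rw [symmDiff_eq_sup_sdiff_inf]; rfl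
      rw [this, Finset.card_sdiff_of_subset (Finset.inter_subset_union)]
      have := Finset.card_le_card (Finset.inter_subset_union (s := a) (t := b))
      omega
    have h3 : Finset.card Finset.univ = Fintype.card X := Finset.card_univ
    omega
  · simp [Finset.disjoint_left]
lemma facet_inter_subset_iff (a b k : Finset X) :
    facet a ∩ facet b ⊆ facet k ∩ facet b ↔ symmDiff k b ⊆ symmDiff a b := by
  constructor
  · intro h x hx
    rw [Finset.mem_symmDiff] at hx ⊢
    by_contra hc
    push_neg at hc
    by_cases hxa : x ∈ a
    · have hxb : x ∈ b := by tauto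
      have := h (Finset.mem_inter.mpr ⟨mem_facet_inl.mpr hxa, mem_facet_inl.mpr hxb⟩)
      rw [Finset.mem_inter, mem_facet_inl, mem_facet_inl] at this
      tauto
    · have hxb : x ∉ b := by tauto
      have := h (Finset.mem_inter.mpr ⟨mem_facet_inr.mpr hxa, mem_facet_inr.mpr hxb⟩)
      rw [Finset.mem_inter, mem_facet_inr, mem_facet_inr] at this
      tauto
  · intro h z hz
    rw [Finset.mem_inter] at hz ⊢
    rcases z with x | x
    · simp only [mem_facet_inl] at hz ⊢
      refine ⟨?_, hz.2⟩
      by_contra hxk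
      have : x ∈ symmDiff k b := Finset.mem_symmDiff.mpr (Or.inr ⟨hz.2, hxk⟩)
      have := h this
      rw [Finset.mem_symmDiff] at this
      tauto
    · simp only [mem_facet_inr] at hz ⊢
      refine ⟨?_, hz.2⟩
      intro hxk
      have : x ∈ symmDiff k b := Finset.mem_symmDiff.mpr (Or.inl ⟨hxk, hz.2⟩)
      have := h this
      rw [Finset.mem_symmDiff] at this
      tauto





def Sprop (l : List (Finset X)) : Prop :=
  ∀ i j, i < j → j < l.length → ∃ k, k < j ∧ hdist (l.getD k ∅) (l.getD j ∅) = 1 ∧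
    symmDiff (l.getD k ∅) (l.getD j ∅) ⊆ symmDiff (l.getD i ∅) (l.getD j ∅)

lemma getD_mem_take {l : List (Finset X)} {i m : ℕ} (hi : i < m) (him : i < l.length) :
    l.getD i ∅ ∈ (l.take m).toFinset := by
  rw [List.mem_toFinset, List.getD_eq_getElem _ _ him]
  have hlen : i < (l.take m).length := by simp [List.length_take]; omega
  exact List.mem_iff_getElem.mpr ⟨i, hlen, List.getElem_take ..⟩

lemma mem_take_getD {l : List (Finset X)} {c : Finset X} {m : ℕ}
    (hc : c ∈ (l.take m).toFinset) : ∃ i, i < m ∧ i < l.length ∧ l.getD i ∅ = c := by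
  rw [List.mem_toFinset] at hc
  obtain ⟨i, hlen, hi⟩ := List.mem_iff_getElem.mp hc
  have h1 : i < m ∧ i < l.length := by
    constructor <;> [skip; skip] <;> (have := hlen; simp [List.length_take] at this; omega)
  refine ⟨i, h1.1, h1.2, ?_⟩
  rw [List.getD_eq_getElem _ _ h1.2, ← List.getElem_take (h := hlen), hi]

lemma nodup_getD_ne {l : List (Finset X)} (hnd : l.Nodup) {i j : ℕ}
    (hi : i < l.length) (hj : j < l.length) (hij : i ≠ j) : l.getD i ∅ ≠ l.getD j ∅ := by
  rw [List.getD_eq_getElem _ _ hi, List.getD_eq_getElem _ _ hj]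
  intro h
  exact hij ((List.Nodup.getElem_inj_iff hnd).mp h)

lemma walk_hdist_le {C : Finset (Finset X)} {u v : {c : Finset X // c ∈ C}}
    (p : (oneInclusionGraph C).Walk u v) : hdist u.1 v.1 ≤ p.length := by
  induction p with
  | nil => simp [hdist_self]
  | @cons a b c h q ih =>
    have h1 : hdist a.1 b.1 = 1 := h
    rw [SimpleGraph.Walk.length_cons]
    calc hdist a.1 c.1 ≤ hdist a.1 b.1 + hdist b.1 c.1 := hdist_triangle _ _ _
    _ ≤ 1 + q.length := by omega
    _ = q.length + 1 := by omega

lemma walks_exist {l : List (Finset X)} (hnd : l.Nodup) (hS : Sprop l) {m : ℕ}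
    (hm : m ≤ l.length) :
    ∀ d i j, i < m → j < m → ∀ (u v : {c : Finset X // c ∈ (l.take m).toFinset}),
      u.1 = l.getD i ∅ → v.1 = l.getD j ∅ → hdist u.1 v.1 = d →
      ∃ p : (oneInclusionGraph (l.take m).toFinset).Walk u v, p.length = d := by
  intro d
  induction d with
  | zero =>
    intro i j hi hj u v hu hv hd
    have : u = v := Subtype.ext (hdist_eq_zero_iff.mp hd)
    subst this
    exact ⟨SimpleGraph.Walk.nil, rfl⟩
  | succ e ih =>
    intro i j hi hj u v hu hv hd
    have hij : i ≠ j := by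
      intro h
      subst h
      rw [hu, ← hv, hdist_self] at hd
      omega
    rcases lt_or_gt_of_ne hij with hlt | hgt
    · obtain ⟨k, hk, h1, hsub⟩ := hS i j hlt (lt_of_lt_of_le hj hm)
      have hstep := hdist_step h1 hsub
      have hkm : k < m := hk.trans hj
      set w : {c : Finset X // c ∈ (l.take m).toFinset} :=
        ⟨l.getD k ∅, getD_mem_take hkm (lt_of_lt_of_le hkm hm)⟩ with hw
      have hw1 : w.1 = l.getD k ∅ := rfl
      have hdw : hdist u.1 w.1 = e := by
        rw [hu, hv] at hd
        rw [hu, hw1]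
        omega
      obtain ⟨p, hp⟩ := ih i k hi hkm u w hu rfl hdw
      have hadj : (oneInclusionGraph (l.take m).toFinset).Adj w v := by
        show hdist w.1 v.1 = 1
        rw [hv]
        exact h1
      exact ⟨p.concat hadj, by rw [SimpleGraph.Walk.length_concat, hp]⟩
    · obtain ⟨k, hk, h1, hsub⟩ := hS j i hgt (lt_of_lt_of_le hi hm)
      have hstep := hdist_step h1 hsub
      have hkm : k < m := hk.trans hi
      set w : {c : Finset X // c ∈ (l.take m).toFinset} :=
        ⟨l.getD k ∅, getD_mem_take hkm (lt_of_lt_of_le hkm hm)⟩ with hw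
      have hw1 : w.1 = l.getD k ∅ := rfl
      have hdw : hdist w.1 v.1 = e := by
        rw [hu, hv] at hd
        rw [hv, hw1]
        have := hdist_comm (l.getD i ∅) (l.getD j ∅)
        have := hdist_comm (l.getD k ∅) (l.getD j ∅)
        omega
      obtain ⟨p, hp⟩ := ih k j hkm hj w v rfl hv hdw
      have hadj : (oneInclusionGraph (l.take m).toFinset).Adj u w := by
        show hdist u.1 w.1 = 1
        rw [hu, hw1, hdist_comm]
        exact h1
      exact ⟨SimpleGraph.Walk.cons hadj p, by rw [SimpleGraph.Walk.length_cons, hp]⟩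

lemma isometric_of_S {l : List (Finset X)} (hnd : l.Nodup) (hS : Sprop l) {m : ℕ}
    (h0 : 0 < m) (hm : m ≤ l.length) : IsIsometric (l.take m).toFinset := by
  have hreach : ∀ u v : {c : Finset X // c ∈ (l.take m).toFinset},
      ∃ p : (oneInclusionGraph (l.take m).toFinset).Walk u v, p.length = hdist u.1 v.1 := by
    intro u v
    obtain ⟨i, him, hil, hiu⟩ := mem_take_getD u.2
    obtain ⟨j, hjm, hjl, hjv⟩ := mem_take_getD v.2
    exact walks_exist hnd hS hm (hdist u.1 v.1) i j him hjm u v hiu.symm hjv.symm rfl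
  have hconn : (oneInclusionGraph (l.take m).toFinset).Connected := by
    rw [SimpleGraph.connected_iff]
    exact ⟨fun u v => ⟨(hreach u v).choose⟩,
      ⟨⟨l.getD 0 ∅, getD_mem_take h0 (lt_of_lt_of_le h0 hm)⟩⟩⟩
  refine ⟨hconn, fun u v => ?_⟩
  obtain ⟨p, hp⟩ := hreach u v
  have h1 := SimpleGraph.dist_le p
  obtain ⟨q, hq⟩ := (hconn u v).exists_walk_length_eq_dist
  have h2 := walk_hdist_le q
  omega

lemma S_of_isometric {l : List (Finset X)} (hnd : l.Nodup)
    (hiso : ∀ i, 0 < i → i ≤ l.length → IsIsometric (l.take i).toFinset) : Sprop l := by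
  intro i j hij hj
  have hm : j + 1 ≤ l.length := hj
  obtain ⟨hconn, hde⟩ := hiso (j + 1) (Nat.succ_pos _) hm
  have hi : i < l.length := hij.trans hj
  set u : {c : Finset X // c ∈ (l.take (j+1)).toFinset} :=
    ⟨l.getD j ∅, getD_mem_take (Nat.lt_succ_self j) hj⟩ with hu
  set v : {c : Finset X // c ∈ (l.take (j+1)).toFinset} :=
    ⟨l.getD i ∅, getD_mem_take (hij.trans (Nat.lt_succ_self j)) hi⟩ with hv
  have hdpos : 0 < hdist u.1 v.1 := by
    rcases Nat.eq_zero_or_pos (hdist u.1 v.1) with h | h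
    · exact absurd (hdist_eq_zero_iff.mp h) (nodup_getD_ne hnd hj hi (Nat.ne_of_gt hij))
    · exact h
  obtain ⟨p, hp⟩ := (hconn u v).exists_walk_length_eq_dist
  rw [hde u v] at hp
  have hne : u ≠ v := by
    intro h
    rw [h, hdist_self] at hdpos
    omega
  obtain ⟨w, hadj, q, rfl⟩ := SimpleGraph.Walk.exists_eq_cons_of_ne hne p
  rw [SimpleGraph.Walk.length_cons] at hp
  have hadj1 : hdist u.1 w.1 = 1 := hadj
  have hqle := walk_hdist_le q
  have htri := hdist_triangle u.1 w.1 v.1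
  have hwv : hdist v.1 w.1 + 1 = hdist v.1 u.1 := by
    rw [hdist_comm v.1 w.1, hdist_comm v.1 u.1]
    omega
  have hsub := step_subset (by rw [hdist_comm]; exact hadj1) hwv
  obtain ⟨k, hkm, hkl, hkw⟩ := mem_take_getD w.2
  have hkj : k ≠ j := by
    intro h
    rw [h] at hkw
    have hu1 : u.1 = l.getD j ∅ := rfl
    rw [hu1, hkw, hdist_self] at hadj1
    omega
  refine ⟨k, lt_of_le_of_ne (Nat.lt_succ_iff.mp hkm) hkj, ?_, ?_⟩
  · rw [hkw, hdist_comm]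
    exact hadj1
  · rw [hkw]
    exact hsub

-- translation lemmas, to append (uses defs from a,b,c)
lemma map_facet_getD {l : List (Finset X)} {k : ℕ} (hk : k < l.length) :
    (l.map facet).getD k ∅ = facet (l.getD k ∅) := by
  rw [List.getD_eq_getElem _ _ (by simpa using hk), List.getD_eq_getElem _ _ hk,
    List.getElem_map]

lemma shelling_iff_S {l : List (Finset X)} (hnd : l.Nodup) :
    IsPartialShelling (l.map facet) ↔ Sprop l := by
  constructor
  · rintro ⟨-, hsh⟩ i j hij hj
    obtain ⟨k, hk, hcard, hsub⟩ := hsh i j hij (by simpa using hj)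
    have hkl : k < l.length := hk.trans hj
    have hil : i < l.length := hij.trans hj
    rw [map_facet_getD hkl, map_facet_getD hj, facet_inter_card] at hcard
    rw [map_facet_getD hkl, map_facet_getD hj, map_facet_getD hil,
      facet_inter_subset_iff] at hsub
    refine ⟨k, hk, ?_, hsub⟩
    have h1 : hdist (l.getD k ∅) (l.getD j ∅) ≠ 0 := fun h =>
      nodup_getD_ne hnd hkl hj (Nat.ne_of_lt hk) (hdist_eq_zero_iff.mp h)
    have h2 := hdist_le_card (l.getD k ∅) (l.getD j ∅)
    omega
  · intro hS
    refine ⟨List.Nodup.map facet_injective hnd, fun i j hij hj => ?_⟩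
    rw [List.length_map] at hj
    obtain ⟨k, hk, h1, hsub⟩ := hS i j hij hj
    have hkl : k < l.length := hk.trans hj
    have hil : i < l.length := hij.trans hj
    refine ⟨k, hk, ?_, ?_⟩
    · rw [map_facet_getD hkl, map_facet_getD hj, facet_inter_card, h1]
    · rw [map_facet_getD hkl, map_facet_getD hj, map_facet_getD hil,
        facet_inter_subset_iff]
      exact hsub


/-- A sequence of distinct facets of the cross-polytope is a partial
shelling if and only if every level set of the corresponding sequence of subsets of `X`
is an isometric concept class. -/
theorem stmt_6 (l : List (Finset X)) (hnd : l.Nodup) :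
    IsPartialShelling (l.map facet) ↔
      ∀ i, 0 < i → i ≤ l.length → IsIsometric (l.take i).toFinset := by
  rw [shelling_iff_S hnd]
  constructor
  · intro hS i h0 hm
    exact isometric_of_S hnd hS h0 hm
  · exact S_of_isometric hnd
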